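/- Suppose G is a marked graph with two unmarked vertices v and w such that v is looped, w is unlooped, and v and w are adjacent to exactly the same vertices outside {v,w} (v and w themselves may or may not be adjacent to each other). Then ⟨G⟩ = ⟨G − v − w⟩. -/

import Mathlib

open MvPolynomial

/-- A marked graph: a finite vertex set, an adjacency matrix over GF(2)
(the diagonal entry at `v` is 1 iff `v` carries a loop; for `v ≠ w` the `(v,w)` entry
is 1 iff `v` and `w` are adjacent), a designated set of marked vertices, and a number
of free loops. -/
structure MarkedGraph (V : Type) [Fintype V] [DecidableEq V] where
  adj : Matrix V V (ZMod 2)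
  marked : V → Bool
  freeLoops : ℕ

namespace MarkedGraph

variable {V : Type} [Fintype V] [DecidableEq V]

/-- GF(2)-nullity of a square matrix: the dimension of its kernel. -/
noncomputable def nullity {ι : Type*} [Fintype ι] (M : Matrix ι ι (ZMod 2)) : ℕ :=
  Module.finrank (ZMod 2) (LinearMap.ker M.mulVecLin)

/-- The diagonal matrix `Δ_T` over GF(2) whose diagonal entry at `v` is 1 iff `v ∈ T`. -/
def delta (T : Finset V) : Matrix V V (ZMod 2) :=
  Matrix.diagonal fun v => if v ∈ T then 1 else 0

/-- The vertices kept in the submatrix `𝒜(G)_T`: delete each marked vertex whose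
diagonal entry in `𝒜(G) + Δ_T` is 0. -/
def keep (G : MarkedGraph V) (T : Finset V) : Finset V :=
  Finset.univ.filter fun v => ¬ (G.marked v = true ∧ (G.adj + delta T) v v = 0)

/-- The submatrix `𝒜(G)_T` of `𝒜(G) + Δ_T`. -/
def subMat (G : MarkedGraph V) (T : Finset V) :
    Matrix (G.keep T) (G.keep T) (ZMod 2) :=
  fun i j => (G.adj + delta T) i.1 j.1

/-- The marked-graph bracket polynomial `[G] ∈ ℤ[A,B,d]`, where `A = X 0`, `B = X 1`,
`d = X 2`:  `[G] = d^φ ⬝ Σ_{T ⊆ V(G)} A^(n-|T|) B^(|T|) d^(ν(𝒜(G)_T))`. -/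
noncomputable def bracket (G : MarkedGraph V) : MvPolynomial (Fin 3) ℤ :=
  X 2 ^ G.freeLoops *
    ∑ T : Finset V,
      X 0 ^ (Fintype.card V - T.card) * X 1 ^ T.card * X 2 ^ nullity (G.subMat T)

/-- `x` is a neighbor of `v` (no vertex is a neighbor of itself). -/
def nbr (G : MarkedGraph V) (v x : V) : Prop := x ≠ v ∧ G.adj v x = 1

instance (G : MarkedGraph V) (v x : V) : Decidable (G.nbr v x) :=
  inferInstanceAs (Decidable (x ≠ v ∧ G.adj v x = 1))

/-- Delete the vertices in `s`, together with all incident edges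
(marks and free loops unchanged). -/
def delete (G : MarkedGraph V) (s : Finset V) : MarkedGraph {v : V // v ∉ s} where
  adj := fun i j => G.adj i.1 j.1
  marked := fun i => G.marked i.1
  freeLoops := G.freeLoops

/-- The local complement `G^v`: toggle every entry of the adjacency matrix (diagonal
entries included) whose row and column indices are both neighbors of `v`. -/
def localComp (G : MarkedGraph V) (v : V) : MarkedGraph V :=
  { G with adj := fun x y => if G.nbr v x ∧ G.nbr v y then G.adj x y + 1 else G.adj x y }

/-- `G - {v,v}`: remove the loop at `v` (set the diagonal entry at `v` to 0). -/
def removeLoop (G : MarkedGraph V) (v : V) : MarkedGraph V :=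
  { G with adj := fun x y => if x = v ∧ y = v then 0 else G.adj x y }

/-- `G + I`: toggle all loops. -/
def addI (G : MarkedGraph V) : MarkedGraph V :=
  { G with adj := G.adj + 1 }

/-- `G⁺`: adjoin one free loop. -/
def addFreeLoop (G : MarkedGraph V) : MarkedGraph V :=
  { G with freeLoops := G.freeLoops + 1 }

/-- The condition under which the pivot `G^{vw}` toggles the adjacency between `x`
and `y`: `x` is a neighbor of `v`, `y` is a neighbor of `w`, and either `x` is not a
neighbor of `w` or `y` is not a neighbor of `v`. -/
def pivotCond (G : MarkedGraph V) (v w x y : V) : Prop :=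
  G.nbr v x ∧ G.nbr w y ∧ (¬ G.nbr w x ∨ ¬ G.nbr v y)

instance (G : MarkedGraph V) (v w x y : V) : Decidable (G.pivotCond v w x y) :=
  inferInstanceAs (Decidable (G.nbr v x ∧ G.nbr w y ∧ (¬ G.nbr w x ∨ ¬ G.nbr v y)))

/-- The pivot `G^{vw}`: toggle the adjacency between every pair of distinct vertices
`x, y ∉ {v,w}` such that `x` is a neighbor of `v`, `y` is a neighbor of `w`, and
either `x` is not a neighbor of `w` or `y` is not a neighbor of `v`
(loops are unaffected). -/
def pivot (G : MarkedGraph V) (v w : V) : MarkedGraph V :=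
  { G with adj := fun x y =>
      if x ≠ v ∧ x ≠ w ∧ y ≠ v ∧ y ≠ w ∧ x ≠ y ∧
          (G.pivotCond v w x y ∨ G.pivotCond v w y x)
      then G.adj x y + 1 else G.adj x y }

/-- Interchange the neighbors of `v` and `w` in an adjacency matrix, keeping loops
and the edge between `v` and `w` unchanged. -/
def swapAdjacencies (M : Matrix V V (ZMod 2)) (v w : V) : Matrix V V (ZMod 2) :=
  fun x y =>
    if x = y then M x y
    else if (x = v ∧ y = w) ∨ (x = w ∧ y = v) then M x y
    else M (Equiv.swap v w x) (Equiv.swap v w y)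

/-- The marked pivot `G_c^{vw}`: the pivot `G^{vw}` with the marks on `v` and `w`
toggled and the neighbors of `v` and `w` interchanged (loops, the edge between `v`
and `w`, and free loops unchanged). -/
def markedPivot (G : MarkedGraph V) (v w : V) : MarkedGraph V where
  adj := swapAdjacencies (G.pivot v w).adj v w
  marked := fun u => if u = v ∨ u = w then !(G.marked u) else G.marked u
  freeLoops := G.freeLoops

/-- The disjoint union of two marked graphs: block-diagonal adjacency matrix,
each vertex marked as it was, free loops added. -/
def disjUnion {V₁ V₂ : Type} [Fintype V₁] [DecidableEq V₁] [Fintype V₂] [DecidableEq V₂]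
    (G₁ : MarkedGraph V₁) (G₂ : MarkedGraph V₂) : MarkedGraph (V₁ ⊕ V₂) where
  adj := Matrix.fromBlocks G₁.adj 0 0 G₂.adj
  marked := Sum.elim G₁.marked G₂.marked
  freeLoops := G₁.freeLoops + G₂.freeLoops

/-- Remove the three edges `{u,v}`, `{u,w}`, `{v,w}` (all else unchanged). -/
def removeEdges3 (G : MarkedGraph V) (u v w : V) : MarkedGraph V :=
  { G with adj := fun x y =>
      if (x = u ∧ y = v) ∨ (x = v ∧ y = u) ∨ (x = u ∧ y = w) ∨ (x = w ∧ y = u) ∨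
          (x = v ∧ y = w) ∨ (x = w ∧ y = v)
      then 0 else G.adj x y }

/-- Adjoin one isolated, unmarked vertex with no incident edges; it is looped iff
`loop = true`. -/
def addIsolated (G : MarkedGraph V) (loop : Bool) : MarkedGraph (Option V) where
  adj := fun x y =>
    match x, y with
    | some a, some b => G.adj a b
    | none, none => if loop then 1 else 0
    | _, _ => 0
  marked := fun x => match x with | some a => G.marked a | none => false
  freeLoops := G.freeLoops

/-- The number of vertices of `s` that are adjacent to `x`. -/
def countAdj (G : MarkedGraph V) (x : V) (s : Finset V) : ℕ :=
  (s.filter fun y => G.adj x y = 1).card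

/-- The reduced marked-graph bracket `⟨G⟩ ∈ ℤ[A, A⁻¹]`: substitute `B ↦ A⁻¹` and
`d ↦ -A² - A⁻²` in `[G]`. -/
noncomputable def reducedBracket (G : MarkedGraph V) : LaurentPolynomial ℤ :=
  MvPolynomial.aeval
    ![LaurentPolynomial.T 1, LaurentPolynomial.T (-1),
      -LaurentPolynomial.T 2 - LaurentPolynomial.T (-2)] G.bracket

/-- The number of looped vertices of `G`. -/
def numLoops (G : MarkedGraph V) : ℕ :=
  (Finset.univ.filter fun v => G.adj v v = 1).card

/-- The Jones polynomial `V_G = (-1)^n ⬝ q^(3n-6ℓ) ⬝ ⟨G⟩(q⁻¹)`, as a Laurent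
polynomial in the formal variable `q` (representing `t^(1/4)`); substituting
`A ↦ q⁻¹` in `⟨G⟩` amounts to substituting `A ↦ q⁻¹`, `B ↦ q`, `d ↦ -q² - q⁻²`
in `[G]`. -/
noncomputable def jones (G : MarkedGraph V) : LaurentPolynomial ℤ :=
  (-1) ^ Fintype.card V *
    LaurentPolynomial.T (3 * (Fintype.card V : ℤ) - 6 * (G.numLoops : ℤ)) *
    MvPolynomial.aeval
      ![LaurentPolynomial.T (-1), LaurentPolynomial.T 1,
        -LaurentPolynomial.T 2 - LaurentPolynomial.T (-2)] G.bracket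

end MarkedGraph

open Matrix

lemma zmod2_add_self (x : ZMod 2) : x + x = 0 := by
  have h : (2 : ZMod 2) = 0 := rfl
  calc x + x = 2 * x := by ring
  _ = 0 := by rw [h, zero_mul]

namespace MG2
open MarkedGraph


set_option linter.unusedSectionVars false

variable {ι κ : Type*} [Fintype ι] [Fintype κ] [DecidableEq ι] [DecidableEq κ]

lemma mem_ker_iff (M : Matrix ι ι (ZMod 2)) (p : ι → ZMod 2) :
    p ∈ LinearMap.ker M.mulVecLin ↔ M.mulVec p = 0 := by
  rw [LinearMap.mem_ker, Matrix.mulVecLin_apply]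

/-- Generic kernel-equivalence constructor. -/
noncomputable def kerEquiv (M : Matrix ι ι (ZMod 2)) (N : Matrix κ κ (ZMod 2))
    (f : (ι → ZMod 2) →ₗ[ZMod 2] (κ → ZMod 2)) (g : (κ → ZMod 2) →ₗ[ZMod 2] (ι → ZMod 2))
    (hf : ∀ p, M.mulVec p = 0 → N.mulVec (f p) = 0)
    (hg : ∀ q, N.mulVec q = 0 → M.mulVec (g q) = 0)
    (hgf : ∀ p, M.mulVec p = 0 → g (f p) = p)
    (hfg : ∀ q, N.mulVec q = 0 → f (g q) = q) :
    LinearMap.ker M.mulVecLin ≃ₗ[ZMod 2] LinearMap.ker N.mulVecLin where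
  toFun p := ⟨f p.1, (mem_ker_iff _ _).2 (hf p.1 ((mem_ker_iff _ _).1 p.2))⟩
  invFun q := ⟨g q.1, (mem_ker_iff _ _).2 (hg q.1 ((mem_ker_iff _ _).1 q.2))⟩
  map_add' a b := Subtype.ext (f.map_add a.1 b.1)
  map_smul' c a := Subtype.ext (f.map_smul c a.1)
  left_inv p := Subtype.ext (hgf p.1 ((mem_ker_iff _ _).1 p.2))
  right_inv q := Subtype.ext (hfg q.1 ((mem_ker_iff _ _).1 q.2))

lemma nullity_eq_of_kerEquiv {M : Matrix ι ι (ZMod 2)} {N : Matrix κ κ (ZMod 2)}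
    (e : LinearMap.ker M.mulVecLin ≃ₗ[ZMod 2] LinearMap.ker N.mulVecLin) :
    nullity M = nullity N := e.finrank_eq

lemma nullity_submatrix (e : κ ≃ ι) (M : Matrix ι ι (ZMod 2)) :
    nullity (M.submatrix e e) = nullity M := by
  have key : ∀ (p : κ → ZMod 2), (M.submatrix e e).mulVec p = (M.mulVec (p ∘ e.symm)) ∘ e := by
    intro p; funext i
    simp only [Matrix.mulVec, dotProduct, Matrix.submatrix_apply, Function.comp_apply]
    exact Fintype.sum_equiv e _ _ (fun j => by rw [Equiv.symm_apply_apply])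
  refine nullity_eq_of_kerEquiv (kerEquiv _ _ (LinearMap.funLeft _ _ e.symm)
    (LinearMap.funLeft _ _ e) ?_ ?_ ?_ ?_)
  · intro p hp
    funext i
    have h2 := congrFun (key p) (e.symm i)
    rw [hp] at h2
    simpa [LinearMap.funLeft, Equiv.apply_symm_apply] using h2.symm
  · intro q hq
    have h2 : (LinearMap.funLeft (ZMod 2) (ZMod 2) ⇑e) q = q ∘ e := rfl
    rw [h2, key]
    have h3 : (q ∘ e) ∘ ⇑e.symm = q := by funext j; simp
    rw [h3, hq]
    rfl
  · intro p _; funext i; simp [LinearMap.funLeft]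
  · intro q _; funext i; simp [LinearMap.funLeft]

end MG2

namespace MG2
open MarkedGraph

variable {ι : Type*} [Fintype ι] [DecidableEq ι]

def Mblk (B : Matrix ι ι (ZMod 2)) (r : ι → ZMod 2) (dv dw c : ZMod 2) :
    Matrix (ι ⊕ Fin 2) (ι ⊕ Fin 2) (ZMod 2) :=
  Matrix.fromBlocks B (fun x _ => r x) (fun _ x => r x) !![dv, c; c, dw]

def Mblk1 (B : Matrix ι ι (ZMod 2)) (r : ι → ZMod 2) (d : ZMod 2) :
    Matrix (ι ⊕ Unit) (ι ⊕ Unit) (ZMod 2) :=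
  Matrix.fromBlocks B (fun x _ => r x) (fun _ x => r x) (fun _ _ => d)

lemma mulVec_Mblk_eq_zero_iff (B : Matrix ι ι (ZMod 2)) (r : ι → ZMod 2) (dv dw c : ZMod 2)
    (p : ι ⊕ Fin 2 → ZMod 2) :
    (Mblk B r dv dw c).mulVec p = 0 ↔
      ((∀ x, B.mulVec (p ∘ Sum.inl) x + r x * (p (Sum.inr 0) + p (Sum.inr 1)) = 0) ∧
       r ⬝ᵥ (p ∘ Sum.inl) + dv * p (Sum.inr 0) + c * p (Sum.inr 1) = 0 ∧
       r ⬝ᵥ (p ∘ Sum.inl) + c * p (Sum.inr 0) + dw * p (Sum.inr 1) = 0) := by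
  have hval : ∀ z, (Mblk B r dv dw c).mulVec p z = Sum.elim
      (fun x => B.mulVec (p ∘ Sum.inl) x + r x * (p (Sum.inr 0) + p (Sum.inr 1)))
      ![r ⬝ᵥ (p ∘ Sum.inl) + dv * p (Sum.inr 0) + c * p (Sum.inr 1),
        r ⬝ᵥ (p ∘ Sum.inl) + c * p (Sum.inr 0) + dw * p (Sum.inr 1)] z := by
    intro z
    rcases z with x | j
    · simp [Mblk, Matrix.mulVec, dotProduct, Fintype.sum_sum_type, Fin.sum_univ_two,
        Matrix.fromBlocks]
      ring
    · fin_cases j <;>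
        (simp [Mblk, Matrix.mulVec, dotProduct, Fintype.sum_sum_type, Fin.sum_univ_two,
          Matrix.fromBlocks]; ring)
  constructor
  · intro h
    have h' : ∀ z, (Mblk B r dv dw c).mulVec p z = 0 := fun z => congrFun h z
    refine ⟨fun x => ?_, ?_, ?_⟩
    · have := h' (Sum.inl x); rw [hval] at this; simpa using this
    · have := h' (Sum.inr 0); rw [hval] at this; simpa using this
    · have := h' (Sum.inr 1); rw [hval] at this; simpa using this
  · rintro ⟨h1, h2, h3⟩
    funext z
    rw [hval]
    rcases z with x | j
    · simpa using h1 x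
    · fin_cases j
      · simpa using h2
      · simpa using h3

lemma mulVec_Mblk1_eq_zero_iff (B : Matrix ι ι (ZMod 2)) (r : ι → ZMod 2) (d : ZMod 2)
    (q : ι ⊕ Unit → ZMod 2) :
    (Mblk1 B r d).mulVec q = 0 ↔
      ((∀ x, B.mulVec (q ∘ Sum.inl) x + r x * q (Sum.inr ()) = 0) ∧
       r ⬝ᵥ (q ∘ Sum.inl) + d * q (Sum.inr ()) = 0) := by
  have hval : ∀ z, (Mblk1 B r d).mulVec q z = Sum.elim
      (fun x => B.mulVec (q ∘ Sum.inl) x + r x * q (Sum.inr ()))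
      (fun _ => r ⬝ᵥ (q ∘ Sum.inl) + d * q (Sum.inr ())) z := by
    intro z
    rcases z with x | j <;>
      simp [Mblk1, Matrix.mulVec, dotProduct, Fintype.sum_sum_type,
        Matrix.fromBlocks]
  constructor
  · intro h
    have h' : ∀ z, (Mblk1 B r d).mulVec q z = 0 := fun z => congrFun h z
    refine ⟨fun x => ?_, ?_⟩
    · have := h' (Sum.inl x); rw [hval] at this; simpa using this
    · have := h' (Sum.inr ()); rw [hval] at this; simpa using this
  · rintro ⟨h1, h2⟩
    funext z
    rw [hval]
    rcases z with x | j
    · simpa using h1 x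
    · simpa using h2

end MG2

namespace MG2
open MarkedGraph

set_option linter.unusedSectionVars false

variable {ι : Type*} [Fintype ι] [DecidableEq ι]

lemma nullity_unit_zero : nullity (0 : Matrix Unit Unit (ZMod 2)) = 1 := by
  rw [nullity, Matrix.mulVecLin_zero, LinearMap.ker_zero, finrank_top]
  simp [Module.finrank_pi]

lemma nullity_fromBlocks_diag {κ : Type*} [Fintype κ] [DecidableEq κ]
    (A : Matrix ι ι (ZMod 2)) (Dm : Matrix κ κ (ZMod 2)) :
    nullity (Matrix.fromBlocks A 0 0 Dm) = nullity A + nullity Dm := by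
  set M := Matrix.fromBlocks A 0 0 Dm with hMdef
  have hM : ∀ p : (ι ⊕ κ → ZMod 2),
      M.mulVec p = 0 ↔ (A.mulVec (p ∘ Sum.inl) = 0 ∧ Dm.mulVec (p ∘ Sum.inr) = 0) := by
    intro p
    have h0 : M.mulVec p = Sum.elim (A.mulVec (p ∘ Sum.inl)) (Dm.mulVec (p ∘ Sum.inr)) := by
      conv_lhs => rw [← Sum.elim_comp_inl_inr p]
      rw [hMdef, Matrix.fromBlocks_mulVec]
      simp
    rw [h0]
    constructor
    · intro h
      exact ⟨funext fun x => congrFun h (Sum.inl x), funext fun x => congrFun h (Sum.inr x)⟩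
    · rintro ⟨h1, h2⟩
      funext z
      rcases z with x | x
      · exact congrFun h1 x
      · exact congrFun h2 x
  have e : LinearMap.ker M.mulVecLin ≃ₗ[ZMod 2]
      (LinearMap.ker A.mulVecLin × LinearMap.ker Dm.mulVecLin) :=
    { toFun := fun p =>
        (⟨p.1 ∘ Sum.inl, (mem_ker_iff _ _).2 ((hM p.1).1 ((mem_ker_iff _ _).1 p.2)).1⟩,
         ⟨p.1 ∘ Sum.inr, (mem_ker_iff _ _).2 ((hM p.1).1 ((mem_ker_iff _ _).1 p.2)).2⟩)
      invFun := fun q =>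
        ⟨Sum.elim q.1.1 q.2.1, (mem_ker_iff _ _).2 ((hM _).2
          ⟨by simpa using (mem_ker_iff _ _).1 q.1.2, by simpa using (mem_ker_iff _ _).1 q.2.2⟩)⟩
      map_add' := fun a b => rfl
      map_smul' := fun cc a => rfl
      left_inv := fun p => Subtype.ext (by funext z; rcases z with x | x <;> rfl)
      right_inv := fun q => by
        refine Prod.ext (Subtype.ext ?_) (Subtype.ext ?_) <;> funext x <;> rfl }
  rw [nullity, e.finrank_eq, Module.finrank_prod]
  rfl

lemma nullity_Mblk_swap (B : Matrix ι ι (ZMod 2)) (r : ι → ZMod 2) (c dv dw : ZMod 2) :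
    nullity (Mblk B r dv dw c) = nullity (Mblk B r dw dv c) := by
  have h : Mblk B r dw dv c = (Mblk B r dv dw c).submatrix
      (Equiv.sumCongr (Equiv.refl ι) (Equiv.swap (0 : Fin 2) 1))
      (Equiv.sumCongr (Equiv.refl ι) (Equiv.swap (0 : Fin 2) 1)) := by
    have hfix : ∀ x : ι, Equiv.swap (Sum.inr 0 : ι ⊕ Fin 2) (Sum.inr 1) (Sum.inl x) = Sum.inl x :=
      fun x => Equiv.swap_apply_of_ne_of_ne (by simp) (by simp)
    ext z z'
    rcases z with x | j <;> rcases z' with y | j'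
    · rfl
    · fin_cases j' <;> simp [Mblk, hfix, Equiv.swap_apply_left, Equiv.swap_apply_right, Matrix.fromBlocks_apply₁₁, Matrix.fromBlocks_apply₁₂, Matrix.fromBlocks_apply₂₁, Matrix.fromBlocks_apply₂₂] <;> rfl
    · fin_cases j <;> simp [Mblk, hfix, Equiv.swap_apply_left, Equiv.swap_apply_right, Matrix.fromBlocks_apply₁₁, Matrix.fromBlocks_apply₁₂, Matrix.fromBlocks_apply₂₁, Matrix.fromBlocks_apply₂₂] <;> rfl
    · fin_cases j <;> fin_cases j' <;>
        simp [Mblk, hfix, Equiv.swap_apply_left, Equiv.swap_apply_right] <;> rfl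
  rw [h, nullity_submatrix]

end MG2

namespace MG2
open MarkedGraph

set_option linter.unusedSectionVars false

variable {ι : Type*} [Fintype ι] [DecidableEq ι]

lemma mulVec_fromBlocks_diag_eq_zero_iff {κ : Type*} [Fintype κ]
    (A : Matrix ι ι (ZMod 2)) (Dm : Matrix κ κ (ZMod 2)) (p : ι ⊕ κ → ZMod 2) :
    (Matrix.fromBlocks A 0 0 Dm).mulVec p = 0 ↔
      (A.mulVec (p ∘ Sum.inl) = 0 ∧ Dm.mulVec (p ∘ Sum.inr) = 0) := by
  have h0 : (Matrix.fromBlocks A 0 0 Dm).mulVec p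
      = Sum.elim (A.mulVec (p ∘ Sum.inl)) (Dm.mulVec (p ∘ Sum.inr)) := by
    conv_lhs => rw [← Sum.elim_comp_inl_inr p]
    rw [Matrix.fromBlocks_mulVec]
    simp
  rw [h0]
  constructor
  · intro h
    exact ⟨funext fun x => congrFun h (Sum.inl x), funext fun x => congrFun h (Sum.inr x)⟩
  · rintro ⟨h1, h2⟩
    funext z
    rcases z with x | x
    · exact congrFun h1 x
    · exact congrFun h2 x

section CaseLemmas

variable (B : Matrix ι ι (ZMod 2)) (r : ι → ZMod 2) (c : ZMod 2)

/-- Case C: `ν(Mblk B r (c+1) c c) = ν(Mblk1 B r c)`. -/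
lemma nullity_Mblk_C : nullity (Mblk B r (c+1) c c) = nullity (Mblk1 B r c) := by
  have htwo : (2 : ZMod 2) = 0 := rfl
  refine nullity_eq_of_kerEquiv (kerEquiv _ _
    (LinearMap.funLeft (ZMod 2) (ZMod 2) (Sum.map id (fun _ => (1 : Fin 2))))
    ({ toFun := fun q => Sum.elim (fun x => q (Sum.inl x)) ![0, q (Sum.inr ())]
       map_add' := fun q q' => by
         funext z
         rcases z with x | j
         · rfl
         · fin_cases j <;> simp
       map_smul' := fun a q => by
         funext z
         rcases z with x | j
         · rfl
         · fin_cases j <;> simp }) ?_ ?_ ?_ ?_)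
  · intro p hp
    rw [mulVec_Mblk_eq_zero_iff] at hp
    obtain ⟨h1, h2, h3⟩ := hp
    have hp0 : p (Sum.inr 0) = 0 := by linear_combination h2 - h3
    rw [mulVec_Mblk1_eq_zero_iff]
    constructor
    · intro x
      show B.mulVec (p ∘ Sum.inl) x + r x * p (Sum.inr 1) = 0
      linear_combination h1 x + (r x) * hp0 - (r x * p (Sum.inr 0)) * htwo
    · show r ⬝ᵥ (p ∘ Sum.inl) + c * p (Sum.inr 1) = 0
      linear_combination h3 + c * hp0 - (c * p (Sum.inr 0)) * htwo
  · intro q hq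
    rw [mulVec_Mblk1_eq_zero_iff] at hq
    obtain ⟨k1, k2⟩ := hq
    rw [mulVec_Mblk_eq_zero_iff]
    refine ⟨fun x => ?_, ?_, ?_⟩
    · show B.mulVec (q ∘ Sum.inl) x + r x * ((0 : ZMod 2) + q (Sum.inr ())) = 0
      linear_combination k1 x
    · show r ⬝ᵥ (q ∘ Sum.inl) + (c+1) * (0 : ZMod 2) + c * q (Sum.inr ()) = 0
      linear_combination k2
    · show r ⬝ᵥ (q ∘ Sum.inl) + c * (0 : ZMod 2) + c * q (Sum.inr ()) = 0
      linear_combination k2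
  · intro p hp
    rw [mulVec_Mblk_eq_zero_iff] at hp
    obtain ⟨h1, h2, h3⟩ := hp
    have hp0 : p (Sum.inr 0) = 0 := by linear_combination h2 - h3
    funext z
    rcases z with x | j
    · rfl
    · fin_cases j
      · exact hp0.symm
      · rfl
  · intro q _
    funext z
    rcases z with x | j
    · rfl
    · rfl

/-- Case D: `ν(Mblk B r (c+1) (c+1) c) = ν(B)`. -/
lemma nullity_Mblk_D : nullity (Mblk B r (c+1) (c+1) c) = nullity B := by
  have htwo : (2 : ZMod 2) = 0 := rfl
  refine nullity_eq_of_kerEquiv (kerEquiv _ _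
    (LinearMap.funLeft (ZMod 2) (ZMod 2) Sum.inl)
    ({ toFun := fun u => Sum.elim u ![r ⬝ᵥ u, r ⬝ᵥ u]
       map_add' := fun u u' => by
         funext z
         rcases z with x | j
         · rfl
         · fin_cases j <;> simp [dotProduct_add]
       map_smul' := fun a u => by
         funext z
         rcases z with x | j
         · rfl
         · fin_cases j <;> simp [dotProduct_smul] }) ?_ ?_ ?_ ?_)
  · intro p hp
    rw [mulVec_Mblk_eq_zero_iff] at hp
    obtain ⟨h1, h2, h3⟩ := hp
    have hp10 : p (Sum.inr 1) = p (Sum.inr 0) := by linear_combination h3 - h2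
    funext x
    show B.mulVec (p ∘ Sum.inl) x = 0
    linear_combination h1 x - (r x) * hp10 - (r x * p (Sum.inr 0)) * htwo
  · intro u hu
    have hu' : ∀ x, B.mulVec u x = 0 := fun x => by rw [hu]; rfl
    rw [mulVec_Mblk_eq_zero_iff]
    refine ⟨fun x => ?_, ?_, ?_⟩
    · show B.mulVec u x + r x * (r ⬝ᵥ u + r ⬝ᵥ u) = 0
      linear_combination hu' x + (r x * (r ⬝ᵥ u)) * htwo
    · show r ⬝ᵥ u + (c+1) * (r ⬝ᵥ u) + c * (r ⬝ᵥ u) = 0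
      linear_combination ((c+1) * (r ⬝ᵥ u)) * htwo
    · show r ⬝ᵥ u + c * (r ⬝ᵥ u) + (c+1) * (r ⬝ᵥ u) = 0
      linear_combination ((c+1) * (r ⬝ᵥ u)) * htwo
  · intro p hp
    rw [mulVec_Mblk_eq_zero_iff] at hp
    obtain ⟨h1, h2, h3⟩ := hp
    have hp10 : p (Sum.inr 1) = p (Sum.inr 0) := by linear_combination h3 - h2
    have hp0 : r ⬝ᵥ (p ∘ Sum.inl) = p (Sum.inr 0) := by
      linear_combination h2 - c * hp10 - ((1+c) * p (Sum.inr 0)) * htwo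
    funext z
    rcases z with x | j
    · rfl
    · fin_cases j
      · exact hp0
      · show r ⬝ᵥ (p ∘ Sum.inl) = p (Sum.inr 1)
        rw [hp10]; exact hp0
  · intro u _
    funext x
    rfl

/-- Case B: `ν(Mblk B r c c c) = ν(Mblk1 B r c) + 1`. -/
lemma nullity_Mblk_B : nullity (Mblk B r c c c) = nullity (Mblk1 B r c) + 1 := by
  have step : nullity (Mblk B r c c c)
      = nullity (Matrix.fromBlocks (Mblk1 B r c) 0 0 (0 : Matrix Unit Unit (ZMod 2))) := by
    refine nullity_eq_of_kerEquiv (kerEquiv _ _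
      ({ toFun := fun p => Sum.elim
            (Sum.elim (fun x => p (Sum.inl x)) (fun _ => p (Sum.inr 0) + p (Sum.inr 1)))
            (fun _ => p (Sum.inr 1))
         map_add' := fun p p' => by
           funext z
           rcases z with (x | u) | u
           · rfl
           · show (p + p') (Sum.inr 0) + (p + p') (Sum.inr 1) = _
             simp only [Pi.add_apply, Sum.elim_inl, Sum.elim_inr]
             ring
           · rfl
         map_smul' := fun a p => by
           funext z
           rcases z with (x | u) | u
           · rfl
           · show (a • p) (Sum.inr 0) + (a • p) (Sum.inr 1) = _
             simp only [Pi.smul_apply, Sum.elim_inl, Sum.elim_inr, smul_eq_mul,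
               RingHom.id_apply]
             ring
           · rfl })
      ({ toFun := fun q => Sum.elim (fun x => q (Sum.inl (Sum.inl x)))
            ![q (Sum.inl (Sum.inr ())) + q (Sum.inr ()), q (Sum.inr ())]
         map_add' := fun q q' => by
           funext z
           rcases z with x | j
           · rfl
           · fin_cases j <;> (simp; try ring)
         map_smul' := fun a q => by
           funext z
           rcases z with x | j
           · rfl
           · fin_cases j <;> (simp [mul_add]; try ring) }) ?_ ?_ ?_ ?_)
    · intro p hp
      rw [mulVec_Mblk_eq_zero_iff] at hp
      obtain ⟨h1, h2, h3⟩ := hp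
      rw [mulVec_fromBlocks_diag_eq_zero_iff]
      constructor
      · rw [mulVec_Mblk1_eq_zero_iff]
        constructor
        · intro x
          show B.mulVec (p ∘ Sum.inl) x + r x * (p (Sum.inr 0) + p (Sum.inr 1)) = 0
          linear_combination h1 x
        · show r ⬝ᵥ (p ∘ Sum.inl) + c * (p (Sum.inr 0) + p (Sum.inr 1)) = 0
          linear_combination h2
      · exact Matrix.zero_mulVec _
    · intro q hq
      rw [mulVec_fromBlocks_diag_eq_zero_iff] at hq
      obtain ⟨hq1, _⟩ := hq
      rw [mulVec_Mblk1_eq_zero_iff] at hq1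
      obtain ⟨k1, k2⟩ := hq1
      have hts : q (Sum.inr ()) + q (Sum.inr ()) = 0 := zmod2_add_self _
      rw [mulVec_Mblk_eq_zero_iff]
      refine ⟨fun x => ?_, ?_, ?_⟩
      · show B.mulVec ((q ∘ Sum.inl) ∘ Sum.inl) x
            + r x * (((q ∘ Sum.inl) (Sum.inr ()) + q (Sum.inr ())) + q (Sum.inr ())) = 0
        linear_combination k1 x + (r x) * hts
      · show r ⬝ᵥ ((q ∘ Sum.inl) ∘ Sum.inl)
            + c * ((q ∘ Sum.inl) (Sum.inr ()) + q (Sum.inr ())) + c * q (Sum.inr ()) = 0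
        linear_combination k2 + c * hts
      · show r ⬝ᵥ ((q ∘ Sum.inl) ∘ Sum.inl)
            + c * ((q ∘ Sum.inl) (Sum.inr ()) + q (Sum.inr ())) + c * q (Sum.inr ()) = 0
        linear_combination k2 + c * hts
    · intro p _
      funext z
      rcases z with x | j
      · rfl
      · fin_cases j
        · show (p (Sum.inr 0) + p (Sum.inr 1)) + p (Sum.inr 1) = p (Sum.inr 0)
          linear_combination zmod2_add_self (p (Sum.inr 1))
        · rfl
    · intro q _
      funext z
      rcases z with (x | u) | u
      · rfl
      · show (q (Sum.inl (Sum.inr ())) + q (Sum.inr ())) + q (Sum.inr ())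
            = q (Sum.inl (Sum.inr u))
        linear_combination zmod2_add_self (q (Sum.inr ()))
      · rfl
  rw [step, nullity_fromBlocks_diag, nullity_unit_zero]

/-- The combined key lemma. -/
lemma nullity_Mblk_key : ∃ k : ℕ,
    nullity (Mblk B r 1 0 c) = k ∧ nullity (Mblk B r 0 1 c) = k ∧
    ((nullity (Mblk B r 0 0 c) = nullity B ∧ nullity (Mblk B r 1 1 c) = k + 1) ∨
     (nullity (Mblk B r 0 0 c) = k + 1 ∧ nullity (Mblk B r 1 1 c) = nullity B)) := by
  have hcase : c = 0 ∨ c = 1 := by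
    have : ∀ a : ZMod 2, a = 0 ∨ a = 1 := by decide
    exact this c
  refine ⟨nullity (Mblk1 B r c), ?_, ?_, ?_⟩
  · rcases hcase with h | h <;> subst h
    · have := nullity_Mblk_C B r 0
      rw [show ((0 : ZMod 2) + 1) = 1 from rfl] at this
      exact this
    · rw [nullity_Mblk_swap]
      have := nullity_Mblk_C B r 1
      rw [show ((1 : ZMod 2) + 1) = 0 from rfl] at this
      exact this
  · rcases hcase with h | h <;> subst h
    · rw [nullity_Mblk_swap]
      have := nullity_Mblk_C B r 0
      rw [show ((0 : ZMod 2) + 1) = 1 from rfl] at this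
      exact this
    · have := nullity_Mblk_C B r 1
      rw [show ((1 : ZMod 2) + 1) = 0 from rfl] at this
      exact this
  · rcases hcase with h | h <;> subst h
    · refine Or.inr ⟨?_, ?_⟩
      · exact nullity_Mblk_B B r 0
      · have := nullity_Mblk_D B r 0
        rw [show ((0 : ZMod 2) + 1) = 1 from rfl] at this
        exact this
    · refine Or.inl ⟨?_, ?_⟩
      · have := nullity_Mblk_D B r 1
        rw [show ((1 : ZMod 2) + 1) = 0 from rfl] at this
        exact this
      · exact nullity_Mblk_B B r 1

end CaseLemmas

end MG2

namespace MG2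
open MarkedGraph

set_option linter.unusedSectionVars false
open Finset

variable {V : Type} [Fintype V] [DecidableEq V]

/-- Lift a subset of `V ∖ {v,w}` together with two booleans to a subset of `V`. -/
def liftT (v w : V) (T' : Finset {x : V // x ∉ ({v, w} : Finset V)}) (bv bw : Bool) :
    Finset V :=
  T'.map ⟨Subtype.val, Subtype.val_injective⟩ ∪
    ((if bv then {v} else ∅) ∪ (if bw then {w} else ∅))

variable {v w : V}

lemma mem_liftT (hvw : v ≠ w) {x : V} (hx : x ∉ ({v, w} : Finset V))
    {T' : Finset {x : V // x ∉ ({v, w} : Finset V)}} {bv bw : Bool} :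
    x ∈ liftT v w T' bv bw ↔ ⟨x, hx⟩ ∈ T' := by
  have hxv : x ≠ v := fun h => hx (by simp [h])
  have hxw : x ≠ w := fun h => hx (by simp [h])
  simp only [liftT, Finset.mem_union, Finset.mem_map, Function.Embedding.coeFn_mk]
  constructor
  · rintro ((⟨a, ha, rfl⟩) | h | h)
    · exact ha
    · exfalso; rcases bv with _ | _ <;> simp_all
    · exfalso; rcases bw with _ | _ <;> simp_all
  · intro h
    exact Or.inl ⟨⟨x, hx⟩, h, rfl⟩

lemma v_mem_liftT (hvw : v ≠ w)
    {T' : Finset {x : V // x ∉ ({v, w} : Finset V)}} {bv bw : Bool} :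
    v ∈ liftT v w T' bv bw ↔ bv = true := by
  simp only [liftT, Finset.mem_union, Finset.mem_map, Function.Embedding.coeFn_mk]
  constructor
  · rintro ((⟨a, _, ha⟩) | h | h)
    · exact absurd (show (a : V) ∈ ({v, w} : Finset V) by simp [ha]) a.2
    · rcases bv with _ | _ <;> simp_all
    · rcases bw with _ | _ <;> simp_all [hvw]
  · intro h
    subst h
    simp
lemma w_mem_liftT (hvw : v ≠ w)
    {T' : Finset {x : V // x ∉ ({v, w} : Finset V)}} {bv bw : Bool} :
    w ∈ liftT v w T' bv bw ↔ bw = true := by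
  simp only [liftT, Finset.mem_union, Finset.mem_map, Function.Embedding.coeFn_mk]
  constructor
  · rintro ((⟨a, _, ha⟩) | h | h)
    · exact absurd (show (a : V) ∈ ({v, w} : Finset V) by simp [ha]) a.2
    · rcases bv with _ | _ <;> simp_all [hvw.symm]
    · rcases bw with _ | _ <;> simp_all
  · intro h
    subst h
    simp

/-- The decomposition equivalence. -/
def liftEquiv (v w : V) (hvw : v ≠ w) :
    (Finset {x : V // x ∉ ({v, w} : Finset V)} × Bool × Bool) ≃ Finset V where
  toFun z := liftT v w z.1 z.2.1 z.2.2
  invFun T := (Finset.univ.filter (fun a => a.1 ∈ T), decide (v ∈ T), decide (w ∈ T))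
  left_inv := by
    rintro ⟨T', bv, bw⟩
    refine Prod.ext ?_ (Prod.ext ?_ ?_)
    · ext a
      simp only [Finset.mem_filter, Finset.mem_univ, true_and]
      rw [mem_liftT hvw a.2]
    · rcases bv with _ | _ <;> simp [v_mem_liftT (T' := T') (bw := bw) hvw]
    · rcases bw with _ | _ <;> simp [w_mem_liftT (T' := T') (bv := bv) hvw]
  right_inv := by
    intro T
    ext x
    by_cases hxv : x = v
    · subst hxv
      rw [v_mem_liftT hvw]
      simp
    · by_cases hxw : x = w
      · subst hxw
        rw [w_mem_liftT hvw]
        simp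
      · have hx : x ∉ ({v, w} : Finset V) := by simp [hxv, hxw]
        rw [mem_liftT hvw hx]
        simp

end MG2
namespace MG2
open MarkedGraph Finset

set_option linter.unusedSectionVars false

variable {V : Type} [Fintype V] [DecidableEq V]

lemma card_liftT {v w : V} (hvw : v ≠ w)
    (T' : Finset {x : V // x ∉ ({v, w} : Finset V)}) (bv bw : Bool) :
    (liftT v w T' bv bw).card = T'.card + ((cond bv 1 0) + (cond bw 1 0)) := by
  have hvU : v ∉ T'.map ⟨Subtype.val, Subtype.val_injective⟩ := by
    simp only [Finset.mem_map, Function.Embedding.coeFn_mk, not_exists]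
    rintro a ⟨ha, h⟩
    exact absurd (show (a : V) ∈ ({v, w} : Finset V) by simp [h]) a.2
  have hwU : w ∉ T'.map ⟨Subtype.val, Subtype.val_injective⟩ := by
    simp only [Finset.mem_map, Function.Embedding.coeFn_mk, not_exists]
    rintro a ⟨ha, h⟩
    exact absurd (show (a : V) ∈ ({v, w} : Finset V) by simp [h]) a.2
  rcases bv with _ | _ <;> rcases bw with _ | _
  · simp [liftT]
  · simp only [liftT, cond_false, cond_true, Bool.false_eq_true, if_false, if_true,
      Finset.empty_union, Finset.union_empty]
    rw [Finset.card_union_of_disjoint (by simp [hwU]), Finset.card_map, Finset.card_singleton]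
  · simp only [liftT, cond_false, cond_true, Bool.false_eq_true, if_false, if_true,
      Finset.empty_union, Finset.union_empty]
    rw [Finset.card_union_of_disjoint (by simp [hvU]), Finset.card_map, Finset.card_singleton]
  · simp only [liftT, cond_true, if_true]
    rw [Finset.card_union_of_disjoint
        (by rw [Finset.disjoint_union_right]; constructor <;> simp [hvU, hwU]),
      Finset.card_map,
      show ({v} ∪ {w} : Finset V) = {v, w} from rfl,
      Finset.card_insert_of_notMem (by simp [hvw]), Finset.card_singleton]

variable (G : MarkedGraph V) {v w : V}

lemma v_mem_keep (hmv : G.marked v = false) (T : Finset V) : v ∈ G.keep T := by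
  simp [keep, hmv]

lemma mem_keep_liftT (hvw : v ≠ w) {x : V} (hx : x ∉ ({v, w} : Finset V))
    (T' : Finset {x : V // x ∉ ({v, w} : Finset V)}) (bv bw : Bool) :
    x ∈ G.keep (liftT v w T' bv bw) ↔
      ⟨x, hx⟩ ∈ (G.delete {v, w}).keep T' := by
  have hdiag : (G.adj + delta (liftT v w T' bv bw)) x x
      = ((G.delete {v, w}).adj + delta T') ⟨x, hx⟩ ⟨x, hx⟩ := by
    simp only [Matrix.add_apply, delta, Matrix.diagonal_apply_eq]
    simp only [mem_liftT hvw hx]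
    rfl
  simp only [keep, Finset.mem_filter, Finset.mem_univ, true_and, hdiag]
  rfl

end MG2
namespace MG2
open MarkedGraph Finset

set_option linter.unusedSectionVars false
set_option maxHeartbeats 1000000

variable {V : Type} [Fintype V] [DecidableEq V]

lemma mem_liftT_val {v w : V} (hvw : v ≠ w) (a : {x : V // x ∉ ({v, w} : Finset V)})
    {T' : Finset {x : V // x ∉ ({v, w} : Finset V)}} {bv bw : Bool} :
    (a : V) ∈ liftT v w T' bv bw ↔ a ∈ T' := mem_liftT hvw a.2

lemma nullity_subMat_liftT (G : MarkedGraph V) {v w : V} (hsym : G.adj.IsSymm) (hvw : v ≠ w)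
    (hmv : G.marked v = false) (hmw : G.marked w = false)
    (hsame : ∀ x, x ≠ v → x ≠ w → G.adj v x = G.adj w x)
    (T' : Finset {x : V // x ∉ ({v, w} : Finset V)}) (bv bw : Bool) :
    nullity (G.subMat (liftT v w T' bv bw)) =
      nullity (Mblk ((G.delete {v, w}).subMat T')
        (fun i => G.adj v i.1.1)
        (G.adj v v + (if bv then 1 else 0))
        (G.adj w w + (if bw then 1 else 0))
        (G.adj v w)) := by
  set T := liftT v w T' bv bw with hT
  have hvk : v ∈ G.keep T := v_mem_keep G hmv T
  have hwk : w ∈ G.keep T := v_mem_keep G hmw T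
  let e : ({i : {x : V // x ∉ ({v, w} : Finset V)} // i ∈ (G.delete {v, w}).keep T'} ⊕ Fin 2)
      ≃ {x : V // x ∈ G.keep T} :=
    { toFun := Sum.elim
        (fun i => ⟨i.1.1, (mem_keep_liftT G hvw i.1.2 T' bv bw).2 i.2⟩)
        ![⟨v, hvk⟩, ⟨w, hwk⟩]
      invFun := fun y =>
        if h1 : y.1 = v then Sum.inr 0
        else if h2 : y.1 = w then Sum.inr 1
        else Sum.inl ⟨⟨y.1, by simp [h1, h2]⟩,
          (mem_keep_liftT G hvw (by simp [h1, h2]) T' bv bw).1 y.2⟩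
      left_inv := by
        rintro (i | j)
        · have h1 : (i.1.1 : V) ≠ v := fun h => i.1.2 (by simp [h])
          have h2 : (i.1.1 : V) ≠ w := fun h => i.1.2 (by simp [h])
          simp only [Sum.elim_inl]
          simp [h1, h2]
        · fin_cases j
          · show (if h1 : v = v then Sum.inr 0 else _) = _
            rw [dif_pos rfl]
            rfl
          · show (if h1 : w = v then Sum.inr 0 else if h2 : w = w then Sum.inr 1 else _) = _
            rw [dif_neg (fun h => hvw h.symm), dif_pos rfl]
            rfl
      right_inv := by
        intro y
        dsimp only
        by_cases h1 : y.1 = v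
        · rw [dif_pos h1]
          exact Subtype.ext h1.symm
        · by_cases h2 : y.1 = w
          · rw [dif_neg h1, dif_pos h2]
            exact Subtype.ext h2.symm
          · rw [dif_neg h1, dif_neg h2]
            exact Subtype.ext rfl }
  have hmat : (G.subMat T).submatrix e e
      = Mblk ((G.delete {v, w}).subMat T') (fun i => G.adj v i.1.1)
          (G.adj v v + (if bv then 1 else 0)) (G.adj w w + (if bw then 1 else 0))
          (G.adj v w) := by
    ext z z'
    rcases z with i | j <;> rcases z' with i' | j'
    · show (G.adj + delta T) i.1.1 i'.1.1 = ((G.delete {v, w}).adj + delta T') i.1 i'.1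
      simp only [Matrix.add_apply, delta, Matrix.diagonal_apply]
      have hadj : G.adj i.1.1 i'.1.1 = (G.delete {v, w}).adj i.1 i'.1 := rfl
      rw [hadj]
      congr 1
      by_cases h : i.1 = i'.1
      · rw [if_pos (congrArg Subtype.val h), if_pos h]
        simp only [hT, mem_liftT_val hvw i.1]
      · rw [if_neg (fun hh => h (Subtype.ext hh)), if_neg h]
    · have h1 : (i.1.1 : V) ≠ v := fun h => i.1.2 (by simp [h])
      have h2 : (i.1.1 : V) ≠ w := fun h => i.1.2 (by simp [h])
      fin_cases j'
      · show (G.adj + delta T) i.1.1 v = G.adj v i.1.1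
        simp only [Matrix.add_apply, delta, Matrix.diagonal_apply_ne _ h1, add_zero]
        exact hsym.apply v i.1.1
      · show (G.adj + delta T) i.1.1 w = G.adj v i.1.1
        simp only [Matrix.add_apply, delta, Matrix.diagonal_apply_ne _ h2, add_zero]
        rw [hsym.apply w i.1.1]
        exact (hsame _ h1 h2).symm
    · have h1 : (i'.1.1 : V) ≠ v := fun h => i'.1.2 (by simp [h])
      have h2 : (i'.1.1 : V) ≠ w := fun h => i'.1.2 (by simp [h])
      fin_cases j
      · show (G.adj + delta T) v i'.1.1 = G.adj v i'.1.1
        simp only [Matrix.add_apply, delta, Matrix.diagonal_apply_ne _ (Ne.symm h1), add_zero]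
      · show (G.adj + delta T) w i'.1.1 = G.adj v i'.1.1
        simp only [Matrix.add_apply, delta, Matrix.diagonal_apply_ne _ (Ne.symm h2), add_zero]
        exact (hsame _ h1 h2).symm
    · fin_cases j <;> fin_cases j'
      · show (G.adj + delta T) v v = G.adj v v + (if bv then 1 else 0)
        simp only [Matrix.add_apply, delta, Matrix.diagonal_apply_eq]
        congr 1
        simp only [hT, v_mem_liftT (T' := T') (bv := bv) (bw := bw) hvw]
      · show (G.adj + delta T) v w = G.adj v w
        simp only [Matrix.add_apply, delta, Matrix.diagonal_apply_ne _ hvw, add_zero]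
      · show (G.adj + delta T) w v = G.adj v w
        simp only [Matrix.add_apply, delta, Matrix.diagonal_apply_ne _ (Ne.symm hvw), add_zero]
        exact (hsym.apply w v).symm
      · show (G.adj + delta T) w w = G.adj w w + (if bw then 1 else 0)
        simp only [Matrix.add_apply, delta, Matrix.diagonal_apply_eq]
        congr 1
        simp only [hT, w_mem_liftT (T' := T') (bv := bv) (bw := bw) hvw]
  rw [← nullity_submatrix e (G.subMat T), hmat]

end MG2
set_option maxHeartbeats 1000000 in
/-- If `v` and `w` are unmarked vertices, `v` looped, `w` unlooped,
adjacent to exactly the same vertices outside `{v,w}`, then `⟨G⟩ = ⟨G - v - w⟩`. -/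
theorem reducedBracket_omega2a {V : Type} [Fintype V] [DecidableEq V]
    (G : MarkedGraph V) (hsym : G.adj.IsSymm) (v w : V) (hvw : v ≠ w)
    (hmv : G.marked v = false) (hmw : G.marked w = false)
    (hv : G.adj v v = 1) (hw : G.adj w w = 0)
    (hsame : ∀ x, x ≠ v → x ≠ w → G.adj v x = G.adj w x) :
    G.reducedBracket = (G.delete {v, w}).reducedBracket := by
  classical
  set AL : LaurentPolynomial ℤ := LaurentPolynomial.T 1 with hAL
  set AiL : LaurentPolynomial ℤ := LaurentPolynomial.T (-1) with hAiL
  set dL : LaurentPolynomial ℤ := -LaurentPolynomial.T 2 - LaurentPolynomial.T (-2) with hdL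
  have hXY : AL * AiL = 1 := by
    rw [hAL, hAiL, ← LaurentPolynomial.T_add]
    norm_num
  have hd : dL = -AL^2 - AiL^2 := by
    rw [hdL, hAL, hAiL, LaurentPolynomial.T_pow, LaurentPolynomial.T_pow]
    norm_num
  have expand : ∀ (W : Type) (iW : Fintype W) (dW : DecidableEq W) (H : MarkedGraph W),
      H.reducedBracket = dL ^ H.freeLoops *
        ∑ T : Finset W, AL ^ (Fintype.card W - T.card) * AiL ^ T.card
          * dL ^ MarkedGraph.nullity (H.subMat T) := by
    intro W iW dW H
    rw [MarkedGraph.reducedBracket, MarkedGraph.bracket]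
    simp only [_root_.map_mul, map_pow, map_sum, MvPolynomial.aeval_X,
      Matrix.cons_val_zero, Matrix.cons_val_one, Matrix.head_cons, Matrix.cons_val_two,
      Matrix.tail_cons]
    rfl
  rw [expand V _ _ G, expand _ _ _ (G.delete {v, w})]
  have hfree : (G.delete {v, w}).freeLoops = G.freeLoops := rfl
  rw [hfree]
  congr 1
  rw [← Equiv.sum_comp (MG2.liftEquiv v w hvw)]
  simp only [MG2.liftEquiv, Equiv.coe_fn_mk, Fintype.sum_prod_type, Fintype.sum_bool]
  have hcV' : Fintype.card {x : V // x ∉ ({v, w} : Finset V)} = Fintype.card V - 2 := by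
    rw [Fintype.card_subtype]
    have h1 : Finset.univ.filter (fun x => x ∉ ({v, w} : Finset V))
        = ({v, w} : Finset V)ᶜ := by
      ext x; simp
    rw [h1, Finset.card_compl]
    congr 1
    rw [Finset.card_insert_of_notMem (by simp [hvw]), Finset.card_singleton]
  have hn2 : 2 ≤ Fintype.card V := by
    have h2 : ({v, w} : Finset V).card = 2 := by
      rw [Finset.card_insert_of_notMem (by simp [hvw]), Finset.card_singleton]
    have := Finset.card_le_univ ({v, w} : Finset V)
    rwa [h2] at this
  refine Finset.sum_congr rfl fun T' _ => ?_
  have ht : T'.card ≤ Fintype.card V - 2 := by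
    have := Finset.card_le_univ T'
    rwa [hcV'] at this
  set n := Fintype.card V with hn
  set t := T'.card with htt
  obtain ⟨k, h10, h01, hdisj⟩ := MG2.nullity_Mblk_key ((G.delete {v, w}).subMat T')
    (fun i => G.adj v i.1.1) (G.adj v w)
  have E : ∀ bv bw : Bool, MarkedGraph.nullity (G.subMat (MG2.liftT v w T' bv bw)) =
      MarkedGraph.nullity (MG2.Mblk ((G.delete {v, w}).subMat T') (fun i => G.adj v i.1.1)
        ((1 : ZMod 2) + (if bv then 1 else 0)) ((0 : ZMod 2) + (if bw then 1 else 0))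
        (G.adj v w)) := by
    intro bv bw
    have h := MG2.nullity_subMat_liftT G hsym hvw hmv hmw hsame T' bv bw
    rw [hv, hw] at h
    exact h
  have E00 := E false false
  have E10 := E true false
  have E01 := E false true
  have E11 := E true true
  rw [show ((1 : ZMod 2) + (if false then 1 else 0)) = 1 from by norm_num,
    show ((0 : ZMod 2) + (if false then 1 else 0)) = 0 from by norm_num] at E00
  rw [show ((1 : ZMod 2) + (if true then 1 else 0)) = 0 from by decide,
    show ((0 : ZMod 2) + (if false then 1 else 0)) = 0 from by norm_num] at E10
  rw [show ((1 : ZMod 2) + (if false then 1 else 0)) = 1 from by norm_num,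
    show ((0 : ZMod 2) + (if true then 1 else 0)) = 1 from by norm_num] at E01
  rw [show ((1 : ZMod 2) + (if true then 1 else 0)) = 0 from by decide,
    show ((0 : ZMod 2) + (if true then 1 else 0)) = 1 from by norm_num] at E11
  have C00 : (MG2.liftT v w T' false false).card = t := by
    simpa using MG2.card_liftT hvw T' false false
  have C10 : (MG2.liftT v w T' true false).card = t + 1 := by
    simpa using MG2.card_liftT hvw T' true false
  have C01 : (MG2.liftT v w T' false true).card = t + 1 := by
    simpa using MG2.card_liftT hvw T' false true
  have C11 : (MG2.liftT v w T' true true).card = t + 2 := by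
    simpa using MG2.card_liftT hvw T' true true
  erw [E00, E10, E01, E11]
  rw [C00, C10, C01, C11]
  rw [h10, h01, hcV']
  set m := n - 2 - t with hm
  rw [show n - t = m + 2 from by omega, show n - (t + 1) = m + 1 from by omega,
    show n - (t + 2) = m from by omega]
  set b := MarkedGraph.nullity ((G.delete {v, w}).subMat T') with hb
  rcases hdisj with ⟨h1, h2⟩ | ⟨h1, h2⟩ <;> rw [h1, h2, hd] <;>
    linear_combination (AL ^ m * AiL ^ t *
      ((-AL^2 - AiL^2) ^ (k+1) + (-AL^2 - AiL^2) ^ b)) * hXY
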